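/- Let 0 < p₁, p₂ < 1, η₁, η₂ > 0, C₁, C₂ > 0, and define ω̂ᵢ(λ) = -Cᵢ Γ(-pᵢ)[(λ+ηᵢ)^{pᵢ} - ηᵢ^{pᵢ}]/λ. Suppose c > 0 and ω̂₁(λ) = c ω̂₂(cλ) for all λ in an infinite subset of (0,∞) (equivalently, the equation has infinitely many solutions on (0,∞)). Then p₁ = p₂, η₁ = η₂/c, and C₁ = c^{p₁} C₂. -/

import Mathlib

open Real Filter Set Topology

private lemma TS_gamma_neg {p : ℝ} (hp : 0 < p) (hp' : p < 1) : Real.Gamma (-p) < 0 := by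
  have h1 : 0 < Real.Gamma (1 - p) := Real.Gamma_pos_of_pos (by linarith)
  have h2 : Real.Gamma (-p + 1) = -p * Real.Gamma (-p) :=
    Real.Gamma_add_one (neg_ne_zero.2 hp.ne')
  have h3 : (1 : ℝ) - p = -p + 1 := by ring
  rw [h3, h2] at h1
  nlinarith

private lemma TS_rpow_diff_le {a b p : ℝ} (ha : 0 < a) (hab : a ≤ b) (hp : 0 ≤ p) (hp' : p ≤ 1) :
    b ^ p - a ^ p ≤ p * a ^ (p - 1) * (b - a) := by
  have hb : 0 < b := ha.trans_le hab
  have hs : (-1 : ℝ) ≤ b / a - 1 := by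
    have : 0 < b / a := div_pos hb ha
    linarith
  have h := rpow_one_add_le_one_add_mul_self hs hp hp'
  have h15 : (1 : ℝ) + (b / a - 1) = b / a := by ring
  rw [h15] at h
  have hap : 0 < a ^ p := Real.rpow_pos_of_pos ha p
  have hmul := mul_le_mul_of_nonneg_right h hap.le
  have h1 : (b / a) ^ p * a ^ p = b ^ p := by
    rw [← Real.mul_rpow (by positivity) ha.le, div_mul_cancel₀ _ ha.ne']
  have h2 : a ^ (p - 1) = a ^ p / a := by
    rw [Real.rpow_sub ha, Real.rpow_one]
  have key : (1 + p * (b / a - 1)) * a ^ p = a ^ p + p * a ^ (p - 1) * (b - a) := by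
    rw [h2]; field_simp
  rw [h1, key] at hmul
  linarith

private lemma TS_tendsto_one (a p : ℝ) :
    Tendsto (fun x : ℝ => (1 + a / x) ^ p) atTop (𝓝 1) := by
  have h0 : Tendsto (fun x : ℝ => 1 + a / x) atTop (𝓝 1) := by
    have := (tendsto_const_nhds (α := ℝ) (f := atTop) (x := a)).div_atTop tendsto_id
    simpa using (tendsto_const_nhds (α := ℝ) (f := atTop) (x := (1:ℝ))).add this
  have hc : ContinuousAt (fun y : ℝ => y ^ p) 1 :=
    Real.continuousAt_rpow_const 1 p (Or.inl one_ne_zero)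
  have := hc.tendsto.comp h0
  simpa [Function.comp_def, Real.one_rpow] using this

private lemma TS_rewrite (a p q : ℝ) :
    (fun x : ℝ => (1 + a / x) ^ p * x ^ (p - q)) =ᶠ[atTop]
      (fun x : ℝ => (x + a) ^ p * x ^ (-q)) := by
  filter_upwards [eventually_ge_atTop (1 + |a|)] with x hx
  have hx0 : (0 : ℝ) < x := by
    have := abs_nonneg a; linarith
  have hxa : (0 : ℝ) < x + a := by
    have := neg_abs_le a; linarith
  have h1 : 1 + a / x = (x + a) / x := by field_simp
  have hxp : x ^ p ≠ 0 := (Real.rpow_pos_of_pos hx0 p).ne'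
  have hxq : x ^ q ≠ 0 := (Real.rpow_pos_of_pos hx0 q).ne'
  show (1 + a / x) ^ p * x ^ (p - q) = (x + a) ^ p * x ^ (-q)
  rw [h1, Real.div_rpow hxa.le hx0.le, Real.rpow_sub hx0, Real.rpow_neg hx0.le]
  field_simp

private lemma TS_tendsto_lt {a p q : ℝ} (hpq : p < q) :
    Tendsto (fun x : ℝ => (x + a) ^ p * x ^ (-q)) atTop (𝓝 0) := by
  have h2 : Tendsto (fun x : ℝ => x ^ (p - q)) atTop (𝓝 0) := by
    have := tendsto_rpow_neg_atTop (y := q - p) (by linarith)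
    simpa [neg_sub] using this
  have h := (TS_tendsto_one a p).mul h2
  rw [one_mul] at h
  exact h.congr' (TS_rewrite a p q)

private lemma TS_tendsto_eq (a p : ℝ) :
    Tendsto (fun x : ℝ => (x + a) ^ p * x ^ (-p)) atTop (𝓝 1) := by
  have heq : (fun x : ℝ => (1 + a / x) ^ p) =ᶠ[atTop]
      (fun x : ℝ => (x + a) ^ p * x ^ (-p)) := by
    refine (TS_rewrite a p p).mp (Eventually.of_forall fun x hx => ?_)
    rw [← hx]; simp [Real.rpow_zero]
  exact (TS_tendsto_one a p).congr' heq

/-- difference of shifted powers tends to zero -/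
private lemma TS_diff_tendsto_zero {a b p : ℝ} (ha : 0 < a) (hb : 0 < b)
    (hp : 0 < p) (hp' : p < 1) :
    Tendsto (fun x : ℝ => (x + a) ^ p - (x + b) ^ p) atTop (𝓝 0) := by
  set m := min a b with hm
  have hm0 : 0 < m := lt_min ha hb
  have hbound : Tendsto (fun x : ℝ => p * (x + m) ^ (p - 1) * |a - b|) atTop (𝓝 0) := by
    have h1 : Tendsto (fun x : ℝ => (x + m) ^ (p - 1)) atTop (𝓝 0) := by
      have h2 : Tendsto (fun x : ℝ => x + m) atTop atTop :=
        tendsto_atTop_add_const_right _ m tendsto_id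
      have h3 := (tendsto_rpow_neg_atTop (y := 1 - p) (by linarith)).comp h2
      simpa [Function.comp_def, neg_sub] using h3
    have := (h1.const_mul p).mul_const |a - b|
    simpa using this
  apply squeeze_zero_norm' _ hbound
  filter_upwards [eventually_ge_atTop 1] with x hx
  have hx0 : (0 : ℝ) < x := by linarith
  have hxm : 0 < x + m := by linarith
  have hdiff : ∀ u v : ℝ, 0 < u → u ≤ v →
      (x + v) ^ p - (x + u) ^ p ≤ p * (x + m) ^ (p - 1) * |a - b| → True := fun _ _ _ _ _ => trivial
  rcases le_total a b with hab | hab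
  · have h := TS_rpow_diff_le (a := x + a) (b := x + b) (by linarith) (by linarith) hp.le hp'.le
    have hmono : (x + a) ^ (p - 1) ≤ (x + m) ^ (p - 1) := by
      have : m ≤ a := min_le_left a b
      exact Real.rpow_le_rpow_of_nonpos hxm (by linarith) (by linarith)
    have hnonneg : (x + a) ^ p ≤ (x + b) ^ p :=
      Real.rpow_le_rpow (by linarith) (by linarith) hp.le
    have habs : |a - b| = b - a := by rw [abs_sub_comm]; exact abs_of_nonneg (by linarith)
    rw [Real.norm_eq_abs, abs_of_nonpos (by linarith), habs]
    have hfin : p * (x + a) ^ (p - 1) * (b - a) ≤ p * (x + m) ^ (p - 1) * (b - a) := by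
      apply mul_le_mul_of_nonneg_right _ (by linarith)
      exact mul_le_mul_of_nonneg_left hmono hp.le
    linarith
  · have h := TS_rpow_diff_le (a := x + b) (b := x + a) (by linarith) (by linarith) hp.le hp'.le
    have hmono : (x + b) ^ (p - 1) ≤ (x + m) ^ (p - 1) := by
      have : m ≤ b := min_le_right a b
      exact Real.rpow_le_rpow_of_nonpos hxm (by linarith) (by linarith)
    have hnonneg : (x + b) ^ p ≤ (x + a) ^ p :=
      Real.rpow_le_rpow (by linarith) (by linarith) hp.le
    have habs : |a - b| = a - b := abs_of_nonneg (by linarith)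
    rw [Real.norm_eq_abs, abs_of_nonneg (by linarith), habs]
    have hfin : p * (x + b) ^ (p - 1) * (a - b) ≤ p * (x + m) ^ (p - 1) * (a - b) := by
      apply mul_le_mul_of_nonneg_right _ (by linarith)
      exact mul_le_mul_of_nonneg_left hmono hp.le
    linarith

private lemma TS_no_lt {p₁ p₂ η₁ η₂ A₁ A₂ K : ℝ}
    (hA₁ : 0 < A₁) (hp₁ : 0 < p₁) (hlt : p₂ < p₁)
    (u : ℕ → ℝ) (hu : Tendsto u atTop atTop)
    (heq : ∀ n, A₁ * (u n + η₁) ^ p₁ - A₂ * (u n + η₂) ^ p₂ = K) : False := by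
  have T1 : Tendsto (fun x : ℝ => A₁ * ((x + η₁) ^ p₁ * x ^ (-p₁))
      - A₂ * ((x + η₂) ^ p₂ * x ^ (-p₁))) atTop (𝓝 A₁) := by
    have := ((TS_tendsto_eq η₁ p₁).const_mul A₁).sub
      ((TS_tendsto_lt (a := η₂) hlt).const_mul A₂)
    simpa using this
  have T2 : Tendsto (fun n => A₁ * ((u n + η₁) ^ p₁ * (u n) ^ (-p₁))
      - A₂ * ((u n + η₂) ^ p₂ * (u n) ^ (-p₁))) atTop (𝓝 A₁) := T1.comp hu
  have T3 : Tendsto (fun n => K * (u n) ^ (-p₁)) atTop (𝓝 0) := by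
    have hKlim : Tendsto (fun x : ℝ => K * x ^ (-p₁)) atTop (𝓝 0) := by
      have := (tendsto_rpow_neg_atTop hp₁).const_mul K
      simpa using this
    exact hKlim.comp hu
  have hEq : (fun n => A₁ * ((u n + η₁) ^ p₁ * (u n) ^ (-p₁))
      - A₂ * ((u n + η₂) ^ p₂ * (u n) ^ (-p₁))) = fun n => K * (u n) ^ (-p₁) := by
    funext n
    rw [← heq n]; ring
  rw [hEq] at T2
  have : A₁ = 0 := tendsto_nhds_unique T2 T3
  linarith

private lemma TS_key {p₁ p₂ η₁ η₂ A₁ A₂ : ℝ}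
    (hp₁ : 0 < p₁) (hp₁' : p₁ < 1) (hp₂ : 0 < p₂) (hp₂' : p₂ < 1)
    (hη₁ : 0 < η₁) (hη₂ : 0 < η₂) (hA₁ : 0 < A₁) (hA₂ : 0 < A₂)
    (u : ℕ → ℝ) (hu : Tendsto u atTop atTop)
    (heq : ∀ n, A₁ * (u n + η₁) ^ p₁ - A₂ * (u n + η₂) ^ p₂
        = A₁ * η₁ ^ p₁ - A₂ * η₂ ^ p₂) :
    p₁ = p₂ ∧ η₁ = η₂ ∧ A₁ = A₂ := by
  have hpp : p₁ = p₂ := by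
    rcases lt_trichotomy p₁ p₂ with h | h | h
    · exact absurd (TS_no_lt (p₁ := p₂) (p₂ := p₁) (η₁ := η₂) (η₂ := η₁)
        (A₁ := A₂) (A₂ := A₁) (K := A₂ * η₂ ^ p₂ - A₁ * η₁ ^ p₁)
        hA₂ hp₂ h u hu (fun n => by linarith [heq n])) id
    · exact h
    · exact absurd (TS_no_lt hA₁ hp₁ h u hu heq) id
  subst hpp
  have hAA : A₁ = A₂ := by
    have T1 : Tendsto (fun x : ℝ => A₁ * ((x + η₁) ^ p₁ * x ^ (-p₁))
        - A₂ * ((x + η₂) ^ p₁ * x ^ (-p₁))) atTop (𝓝 (A₁ - A₂)) := by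
      have := ((TS_tendsto_eq η₁ p₁).const_mul A₁).sub ((TS_tendsto_eq η₂ p₁).const_mul A₂)
      simpa using this
    have T2 : Tendsto (fun n => A₁ * ((u n + η₁) ^ p₁ * (u n) ^ (-p₁))
        - A₂ * ((u n + η₂) ^ p₁ * (u n) ^ (-p₁))) atTop (𝓝 (A₁ - A₂)) := T1.comp hu
    have T3 : Tendsto (fun n => (A₁ * η₁ ^ p₁ - A₂ * η₂ ^ p₁) * (u n) ^ (-p₁))
        atTop (𝓝 0) := by
      have := ((tendsto_rpow_neg_atTop hp₁).const_mul (A₁ * η₁ ^ p₁ - A₂ * η₂ ^ p₁)).comp hu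
      simpa [Function.comp_def] using this
    have hEq : (fun n => A₁ * ((u n + η₁) ^ p₁ * (u n) ^ (-p₁))
        - A₂ * ((u n + η₂) ^ p₁ * (u n) ^ (-p₁)))
        = fun n => (A₁ * η₁ ^ p₁ - A₂ * η₂ ^ p₁) * (u n) ^ (-p₁) := by
      funext n
      rw [← heq n]; ring
    rw [hEq] at T2
    have h0 : A₁ - A₂ = 0 := tendsto_nhds_unique T2 T3
    linarith
  subst hAA
  refine ⟨rfl, ?_, rfl⟩
  have hdiff : ∀ n, (u n + η₁) ^ p₁ - (u n + η₂) ^ p₁ = η₁ ^ p₁ - η₂ ^ p₁ := by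
    intro n
    have := heq n
    have hA := hA₁.ne'
    rw [← mul_right_inj' hA]
    nlinarith [this]
  have T : Tendsto (fun n => (u n + η₁) ^ p₁ - (u n + η₂) ^ p₁) atTop (𝓝 0) :=
    (TS_diff_tendsto_zero hη₁ hη₂ hp₁ hp₁').comp hu
  have hEq : (fun n => (u n + η₁) ^ p₁ - (u n + η₂) ^ p₁)
      = fun _ => η₁ ^ p₁ - η₂ ^ p₁ := funext hdiff
  rw [hEq] at T
  have h0 : η₁ ^ p₁ - η₂ ^ p₁ = 0 := tendsto_nhds_unique tendsto_const_nhds T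
  rcases lt_trichotomy η₁ η₂ with h | h | h
  · have := Real.rpow_lt_rpow hη₁.le h hp₁
    linarith
  · exact h
  · have := Real.rpow_lt_rpow hη₂.le h hp₁
    linarith

private lemma TS_div {X Y l c : ℝ} (hl : l ≠ 0) (hc : c ≠ 0)
    (h : X / l = c * (Y / (c * l))) : X = Y := by
  field_simp at h
  have h1 : X * (c * l) = Y * (c * l) := by rw [h]
  exact mul_right_cancel₀ (mul_ne_zero hc hl) h1

private lemma TS_analytic_ext {p₁ p₂ η₁ η₂ A₁ A₂ K : ℝ}
    (hη₁ : 0 < η₁) (hη₂ : 0 < η₂)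
    (S : Set ℝ) (hS : S ⊆ Set.Ioi (0:ℝ)) (hSinf : S.Infinite) (M : ℝ)
    (hM : ∀ x ∈ S, x ≤ M)
    (heq : ∀ l ∈ S, A₁ * (l + η₁) ^ p₁ - A₂ * (l + η₂) ^ p₂ = K) :
    ∀ l : ℝ, 0 < l → A₁ * (l + η₁) ^ p₁ - A₂ * (l + η₂) ^ p₂ = K := by
  set δ : ℝ := min η₁ η₂ with hδdef
  have hδ : 0 < δ := lt_min hη₁ hη₂
  set F : ℂ → ℂ := fun z =>
    (A₁ : ℂ) * (z + (η₁ : ℂ)) ^ (p₁ : ℂ) - (A₂ : ℂ) * (z + (η₂ : ℂ)) ^ (p₂ : ℂ) - (K : ℂ)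
    with hFdef
  set U : Set ℂ := {z : ℂ | -δ < z.re} with hUdef
  have hAnal : AnalyticOnNhd ℂ F U := by
    intro z hz
    have hz' : -δ < z.re := hz
    have hz1 : (0 : ℝ) < (z + (η₁ : ℂ)).re := by
      simp only [Complex.add_re, Complex.ofReal_re]
      have : δ ≤ η₁ := min_le_left _ _
      linarith
    have hz2 : (0 : ℝ) < (z + (η₂ : ℂ)).re := by
      simp only [Complex.add_re, Complex.ofReal_re]
      have : δ ≤ η₂ := min_le_right _ _
      linarith
    have a1 : AnalyticAt ℂ (fun z : ℂ => (z + (η₁ : ℂ)) ^ (p₁ : ℂ)) z :=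
      ((analyticAt_id).add analyticAt_const).cpow analyticAt_const (Or.inl hz1)
    have a2 : AnalyticAt ℂ (fun z : ℂ => (z + (η₂ : ℂ)) ^ (p₂ : ℂ)) z :=
      ((analyticAt_id).add analyticAt_const).cpow analyticAt_const (Or.inl hz2)
    exact ((analyticAt_const.mul a1).sub (analyticAt_const.mul a2)).sub analyticAt_const
  have hcast : ∀ y : ℝ, 0 < y →
      F (y : ℂ) = ((A₁ * (y + η₁) ^ p₁ - A₂ * (y + η₂) ^ p₂ - K : ℝ) : ℂ) := by
    intro y hy
    have e1 : ((y : ℂ) + (η₁ : ℂ)) ^ (p₁ : ℂ) = (((y + η₁ : ℝ) ^ p₁ : ℝ) : ℂ) := by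
      rw [← Complex.ofReal_add, ← Complex.ofReal_cpow (by positivity) p₁]
    have e2 : ((y : ℂ) + (η₂ : ℂ)) ^ (p₂ : ℂ) = (((y + η₂ : ℝ) ^ p₂ : ℝ) : ℂ) := by
      rw [← Complex.ofReal_add, ← Complex.ofReal_cpow (by positivity) p₂]
    rw [hFdef]
    simp only [e1, e2]
    push_cast
    ring
  have hzero : ∀ y ∈ S, F (y : ℂ) = 0 := by
    intro y hy
    rw [hcast y (hS hy), heq y hy]
    simp
  have hsub : S ⊆ Set.Icc 0 M := fun x hx => ⟨(hS hx).le, hM x hx⟩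
  obtain ⟨x₀, hx₀K, hacc⟩ := hSinf.exists_accPt_of_subset_isCompact isCompact_Icc hsub
  have hfreqR : ∃ᶠ x in 𝓝[≠] x₀, x ∈ S := by
    rw [accPt_iff_frequently] at hacc
    rw [frequently_nhdsWithin_iff]
    exact hacc.mono fun x h => ⟨h.2, h.1⟩
  have hT : Tendsto (fun x : ℝ => (x : ℂ)) (𝓝[≠] x₀) (𝓝[≠] (x₀ : ℂ)) := by
    rw [tendsto_nhdsWithin_iff]
    constructor
    · exact Complex.continuous_ofReal.continuousAt.mono_left nhdsWithin_le_nhds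
    · filter_upwards [eventually_mem_nhdsWithin] with x hx
      simpa [Set.mem_compl_iff, Complex.ofReal_inj] using hx
  have hfreqC : ∃ᶠ z in 𝓝[≠] (x₀ : ℂ), F z = 0 :=
    hT.frequently (hfreqR.mono fun x hx => hzero x hx)
  have hU : IsPreconnected U := (convex_halfSpace_re_gt (-δ)).isPreconnected
  have hx₀U : (x₀ : ℂ) ∈ U := by
    show -δ < (x₀ : ℂ).re
    rw [Complex.ofReal_re]
    linarith [hx₀K.1]
  have hEqOn := hAnal.eqOn_zero_of_preconnected_of_frequently_eq_zero hU hx₀U hfreqC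
  intro l hl
  have hlU : (l : ℂ) ∈ U := by
    show -δ < (l : ℂ).re
    rw [Complex.ofReal_re]
    linarith
  have h0 := hEqOn hlU
  rw [hcast l hl] at h0
  have : A₁ * (l + η₁) ^ p₁ - A₂ * (l + η₂) ^ p₂ - K = 0 := by
    have h0' : ((A₁ * (l + η₁) ^ p₁ - A₂ * (l + η₂) ^ p₂ - K : ℝ) : ℂ) = 0 := h0
    exact_mod_cast h0'
  linarith

/-- If the tempered-stable tail Laplace transforms satisfy
ω̂₁(λ) = c ω̂₂(cλ) on an infinite subset of (0,∞), then p₁ = p₂, η₁ = η₂/c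
and C₁ = c^{p₁} C₂. -/
theorem tempered_stable_scaling_identification
    (p₁ p₂ η₁ η₂ C₁ C₂ c : ℝ)
    (hp₁ : 0 < p₁) (hp₁' : p₁ < 1) (hp₂ : 0 < p₂) (hp₂' : p₂ < 1)
    (hη₁ : 0 < η₁) (hη₂ : 0 < η₂) (hC₁ : 0 < C₁) (hC₂ : 0 < C₂) (hc : 0 < c)
    (ωhat₁ ωhat₂ : ℝ → ℝ)
    (h₁ : ∀ l : ℝ, ωhat₁ l = -C₁ * Real.Gamma (-p₁) * ((l + η₁) ^ p₁ - η₁ ^ p₁) / l)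
    (h₂ : ∀ l : ℝ, ωhat₂ l = -C₂ * Real.Gamma (-p₂) * ((l + η₂) ^ p₂ - η₂ ^ p₂) / l)
    (S : Set ℝ) (hS : S ⊆ Set.Ioi (0:ℝ)) (hSinf : S.Infinite)
    (heq : ∀ l ∈ S, ωhat₁ l = c * ωhat₂ (c * l)) :
    p₁ = p₂ ∧ η₁ = η₂ / c ∧ C₁ = c ^ p₁ * C₂ := by
  have hΓ₁ : Real.Gamma (-p₁) < 0 := TS_gamma_neg hp₁ hp₁'
  have hΓ₂ : Real.Gamma (-p₂) < 0 := TS_gamma_neg hp₂ hp₂'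
  set A₁ : ℝ := -C₁ * Real.Gamma (-p₁) with hA₁def
  set A₂ : ℝ := -C₂ * Real.Gamma (-p₂) with hA₂def
  set b : ℝ := η₂ / c with hbdef
  set B₂ : ℝ := A₂ * c ^ p₂ with hB₂def
  have hA₁ : 0 < A₁ := by rw [hA₁def]; nlinarith
  have hA₂ : 0 < A₂ := by rw [hA₂def]; nlinarith
  have hcp : 0 < c ^ p₂ := Real.rpow_pos_of_pos hc p₂
  have hB₂ : 0 < B₂ := mul_pos hA₂ hcp
  have hb : 0 < b := div_pos hη₂ hc
  -- key equation on S
  have hkey : ∀ l ∈ S, A₁ * (l + η₁) ^ p₁ - B₂ * (l + b) ^ p₂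
      = A₁ * η₁ ^ p₁ - B₂ * b ^ p₂ := by
    intro l hl
    have hl0 : 0 < l := hS hl
    have h := heq l hl
    rw [h₁ l, h₂ (c * l)] at h
    have hXY : -C₁ * Real.Gamma (-p₁) * ((l + η₁) ^ p₁ - η₁ ^ p₁)
        = -C₂ * Real.Gamma (-p₂) * ((c * l + η₂) ^ p₂ - η₂ ^ p₂) :=
      TS_div hl0.ne' hc.ne' h
    have e0 : c * l + η₂ = c * (l + b) := by
      rw [hbdef]
      field_simp
    have e1 : (c * l + η₂) ^ p₂ = c ^ p₂ * (l + b) ^ p₂ := by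
      rw [e0, Real.mul_rpow hc.le (by positivity)]
    have e2 : η₂ ^ p₂ = c ^ p₂ * b ^ p₂ := by
      have : η₂ = c * b := by
        rw [hbdef]
        field_simp
      rw [this, Real.mul_rpow hc.le hb.le]
    rw [e1, e2] at hXY
    rw [hA₁def, hB₂def, hA₂def]
    ring_nf
    ring_nf at hXY
    linarith
  -- produce an unbounded sequence on which the key equation holds
  have hmain : p₁ = p₂ ∧ η₁ = b ∧ A₁ = B₂ := by
    by_cases hbd : ∃ M, ∀ x ∈ S, x ≤ M
    · obtain ⟨M, hM⟩ := hbd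
      have hext := TS_analytic_ext hη₁ hb S hS hSinf M hM hkey
      refine TS_key hp₁ hp₁' hp₂ hp₂' hη₁ hb hA₁ hB₂ (fun n => (n : ℝ) + 1) ?_ ?_
      · exact tendsto_atTop_add_const_right _ 1 tendsto_natCast_atTop_atTop
      · exact fun n => hext ((n : ℝ) + 1) (by positivity)
    · push_neg at hbd
      have hch : ∀ n : ℕ, ∃ x, x ∈ S ∧ (n : ℝ) < x := by
        intro n
        obtain ⟨x, hxS, hx⟩ := hbd (n : ℝ)
        exact ⟨x, hxS, hx⟩
      choose u hu1 hu2 using hch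
      refine TS_key hp₁ hp₁' hp₂ hp₂' hη₁ hb hA₁ hB₂ u ?_ (fun n => hkey (u n) (hu1 n))
      exact tendsto_atTop_mono (fun n => (hu2 n).le) tendsto_natCast_atTop_atTop
  obtain ⟨hpp, hbb, hAB⟩ := hmain
  refine ⟨hpp, hbb, ?_⟩
  rw [hA₁def, hB₂def, hA₂def, ← hpp] at hAB
  have hΓne : Real.Gamma (-p₁) ≠ 0 := hΓ₁.ne
  have : C₁ * Real.Gamma (-p₁) = c ^ p₁ * C₂ * Real.Gamma (-p₁) := by
    rw [hpp] at hAB ⊢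
    nlinarith [hAB]
  exact mul_right_cancel₀ hΓne this
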